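/- Let M be a set with a multiplication μ : M × M → M satisfying the symmetric space identities (1)–(3). Fix o, p ∈ M and suppose P : ℤ → M satisfies P(0) = o, P(1) = p, and P(n+1) = μ(P(n), P(n−1)) for all n ∈ ℤ. Then for all integers m and n, μ(P(m), P(n)) = P(2m − n). In particular the map m ↦ P(m) is a homomorphism of symmetric spaces from ℤ (with product m·n = 2m − n) to M. -/
import Mathlib


/-- Powers of p relative to base point o: if P(0) = o, P(1) = p and
P(n+1) = μ(P(n), P(n−1)) for all n ∈ ℤ, then μ(P(m), P(n)) = P(2m − n), i.e.
m ↦ P(m) is a homomorphism from the symmetric space ℤ (m·n = 2m − n) to M. -/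
theorem stmt17 {M : Type*} (μ : M → M → M)
    (h1 : ∀ p : M, μ p p = p) (h2 : ∀ p q : M, μ p (μ p q) = q)
    (h3 : ∀ p q r : M, μ p (μ q r) = μ (μ p q) (μ p r))
    (o p : M) (P : ℤ → M) (hP0 : P 0 = o) (hP1 : P 1 = p)
    (hrec : ∀ n : ℤ, P (n + 1) = μ (P n) (P (n - 1))) :
    ∀ m n : ℤ, μ (P m) (P n) = P (2 * m - n) := by
  have key : ∀ m k : ℤ, μ (P m) (P (m + k)) = P (m - k) := by
    intro m
    have sym : ∀ k : ℤ, μ (P m) (P (m + k)) = P (m - k) →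
        μ (P m) (P (m - k)) = P (m + k) := by
      intro k hk
      have := h2 (P m) (P (m + k))
      rw [hk] at this
      exact this
    have A : ∀ a : ℕ, μ (P m) (P (m + a)) = P (m - a) ∧
        μ (P m) (P (m + (a + 1))) = P (m - (a + 1)) := by
      intro a
      induction a with
      | zero =>
        constructor
        · simpa using h1 (P m)
        · have e : P (m + 1) = μ (P m) (P (m - 1)) := hrec m
          rw [show (m + ((0:ℕ) + 1) : ℤ) = m + 1 by push_cast; ring, e, h2]
          norm_num
      | succ a ih =>
        obtain ⟨hA, hB⟩ := ih
        refine ⟨by push_cast at hB ⊢; exact hB, ?_⟩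
        have e : P (m + (a + 1) + 1) = μ (P (m + (a + 1))) (P (m + (a + 1) - 1)) :=
          hrec (m + (a + 1))
        have e2 : (m + ((a:ℤ) + 1) - 1) = m + a := by ring
        rw [e2] at e
        have : μ (P m) (P (m + (a + 1) + 1)) =
            μ (μ (P m) (P (m + ((a:ℤ) + 1)))) (μ (P m) (P (m + a))) := by
          rw [e, h3]
        rw [hB, hA] at this
        have e3 : P (m - a) = μ (P (m - (a + 1))) (P (m - (a + 1) - 1)) := by
          have := hrec (m - ((a:ℤ) + 1))
          rw [show (m - ((a:ℤ) + 1) + 1) = m - a by ring] at this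
          exact this
        rw [e3, h2] at this
        rw [show (m + (((a:ℕ)+1:ℕ) + 1 : ℤ)) = m + ((a:ℤ) + 1) + 1 by push_cast; ring,
          this]
        congr 1; push_cast; ring
    intro k
    rcases Int.eq_nat_or_neg k with ⟨a, rfl | rfl⟩
    · exact (A a).1
    · have := sym a (A a).1
      rw [show (m + -(a:ℤ)) = m - a by ring, this]
      congr 1; ring
  intro m n
  have := key m (n - m)
  rw [show (m + (n - m)) = n by ring] at this
  rw [this]
  congr 1; ring
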